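/- Let n ≥ 3. Define Ω^> = {x ∈ ℝ^{n+1} : x_1 > 0 and x_{n+1} > x_1 x_2 + x_1 Σ_{j=3}^n x_j²} and Ω^< = {x ∈ ℝ^{n+1} : x_1 > 0 and x_{n+1} < x_1 x_2 + x_1 Σ_{j=3}^n x_j²}. For q > 0, r ≠ 0, t ∈ ℝ, s = (s_3,…,s_n) ∈ ℝ^{n−2}, define the affine map T_{q,r,t,s}(x) = (q x_1, r²(x_2 − 2Σ_{j=3}^n s_j x_j + t), r(x_3 + s_3), …, r(x_n + s_n), q r²(x_{n+1} + x_1 Σ_{j=3}^n s_j² + t x_1)). Then every T_{q,r,t,s} maps Ω^> bijectively onto Ω^> and maps Ω^< bijectively onto Ω^<. -/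

import Mathlib

/-- The domain `Ω^> = {x ∈ ℝ^{n+1} : x₁ > 0, x_{n+1} > x₁x₂ + x₁ Σ_{j=3}^n x_j²}`
(coordinates are 0-indexed: `x₁ = x 0`, `x₂ = x 1`, `x_j = x (j-1)`, `x_{n+1} = x n`). -/
def omegaGT (n : ℕ) (hn : 3 ≤ n) : Set (Fin (n + 1) → ℝ) :=
  {x | 0 < x 0 ∧ x 0 * x ⟨1, by omega⟩ +
    x 0 * ∑ j : Fin (n + 1), (if 2 ≤ (j : ℕ) ∧ (j : ℕ) < n then x j ^ 2 else 0)
      < x (Fin.last n)}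

/-- The domain `Ω^< = {x ∈ ℝ^{n+1} : x₁ > 0, x_{n+1} < x₁x₂ + x₁ Σ_{j=3}^n x_j²}`. -/
def omegaLT (n : ℕ) (hn : 3 ≤ n) : Set (Fin (n + 1) → ℝ) :=
  {x | 0 < x 0 ∧ x (Fin.last n) < x 0 * x ⟨1, by omega⟩ +
    x 0 * ∑ j : Fin (n + 1), (if 2 ≤ (j : ℕ) ∧ (j : ℕ) < n then x j ^ 2 else 0)}

/-- The affine map `T_{q,r,t,s}` : `x₁ ↦ q x₁`, `x₂ ↦ r²(x₂ − 2Σ s_j x_j + t)`,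
`x_j ↦ r(x_j + s_j)` (for `3 ≤ j ≤ n`), `x_{n+1} ↦ q r²(x_{n+1} + x₁ Σ s_j² + t x₁)`. -/
def Tmap (n : ℕ) (q r t : ℝ) (s : Fin (n - 2) → ℝ) (x : Fin (n + 1) → ℝ) :
    Fin (n + 1) → ℝ := fun i =>
  if h0 : (i : ℕ) = 0 then q * x i
  else if h1 : (i : ℕ) = 1 then
    r ^ 2 * (x i - 2 * (∑ j : Fin (n - 2), s j * x ⟨(j : ℕ) + 2, by have := j.isLt; omega⟩) + t)
  else if h2 : (i : ℕ) = n then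
    q * r ^ 2 * (x i + x 0 * (∑ j : Fin (n - 2), s j ^ 2) + t * x 0)
  else r * (x i + s ⟨(i : ℕ) - 2, by have := i.isLt; omega⟩)

/-- The middle coordinates `⟨j+2⟩` for `j : Fin (n-2)`, as elements of `Fin (n+1)`. -/
def mid (n : ℕ) (hn : 3 ≤ n) (j : Fin (n - 2)) : Fin (n + 1) :=
  ⟨(j : ℕ) + 2, by have := j.isLt; omega⟩

section
variable (n : ℕ) (q r t : ℝ) (s : Fin (n - 2) → ℝ) (x : Fin (n + 1) → ℝ)

lemma sum_if (hn : 3 ≤ n) (f : Fin (n + 1) → ℝ) :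
    ∑ j : Fin (n + 1), (if 2 ≤ (j : ℕ) ∧ (j : ℕ) < n then f j else 0)
      = ∑ j : Fin (n - 2), f (mid n hn j) := by
  rw [← Finset.sum_filter]
  refine Finset.sum_bij (fun j hj => (⟨(j : ℕ) - 2, by
      have := (Finset.mem_filter.mp hj).2; omega⟩ : Fin (n - 2))) ?_ ?_ ?_ ?_
  · intro a ha; exact Finset.mem_univ _
  · intro a ha b hb hab
    have ha2 := (Finset.mem_filter.mp ha).2
    have hb2 := (Finset.mem_filter.mp hb).2
    exact Fin.ext (by have := congrArg Fin.val hab; simp at this; omega)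
  · intro b _
    refine ⟨mid n hn b, Finset.mem_filter.mpr ⟨Finset.mem_univ _, by
      simp [mid]; have := b.isLt; omega⟩, Fin.ext (by simp [mid])⟩
  · intro a ha
    have ha2 := (Finset.mem_filter.mp ha).2
    congr 1
    exact Fin.ext (by simp [mid]; omega)

lemma Tmap_zero : Tmap n q r t s x 0 = q * x 0 := by simp [Tmap]

lemma Tmap_one (hn : 3 ≤ n) : Tmap n q r t s x ⟨1, by omega⟩
    = r ^ 2 * (x ⟨1, by omega⟩ - 2 * (∑ j : Fin (n - 2), s j * x (mid n hn j)) + t) := by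
  simp [Tmap, mid]

lemma Tmap_last (hn : 3 ≤ n) : Tmap n q r t s x (Fin.last n)
    = q * r ^ 2 * (x (Fin.last n) + x 0 * (∑ j : Fin (n - 2), s j ^ 2) + t * x 0) := by
  simp only [Tmap, Fin.last]
  rw [dif_neg (by omega), dif_neg (by omega), dif_pos trivial]

lemma Tmap_mid (hn : 3 ≤ n) (j : Fin (n - 2)) : Tmap n q r t s x (mid n hn j)
    = r * (x (mid n hn j) + s j) := by
  have hj := j.isLt
  simp only [Tmap]
  rw [dif_neg (by simp only [mid]; omega), dif_neg (by simp only [mid]; omega),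
    dif_neg (by simp only [mid]; omega)]
  congr 2

lemma Tmap_key (hn : 3 ≤ n) :
    Tmap n q r t s x (Fin.last n)
      - (Tmap n q r t s x 0 * Tmap n q r t s x ⟨1, by omega⟩
        + Tmap n q r t s x 0 *
          ∑ j : Fin (n + 1), (if 2 ≤ (j : ℕ) ∧ (j : ℕ) < n then Tmap n q r t s x j ^ 2 else 0))
    = q * r ^ 2 * (x (Fin.last n) - (x 0 * x ⟨1, by omega⟩
        + x 0 * ∑ j : Fin (n + 1), (if 2 ≤ (j : ℕ) ∧ (j : ℕ) < n then x j ^ 2 else 0))) := by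
  rw [sum_if n hn, sum_if n hn, Tmap_zero, Tmap_one n q r t s x hn,
    Tmap_last n q r t s x hn]
  have h0 : ∑ j : Fin (n - 2), Tmap n q r t s x (mid n hn j) ^ 2
      = ∑ j : Fin (n - 2), (r ^ 2 * x (mid n hn j) ^ 2
          + 2 * r ^ 2 * (s j * x (mid n hn j)) + r ^ 2 * s j ^ 2) :=
    Finset.sum_congr rfl fun j _ => by rw [Tmap_mid n q r t s x hn]; ring
  rw [h0, Finset.sum_add_distrib, Finset.sum_add_distrib, ← Finset.mul_sum, ← Finset.mul_sum,
    ← Finset.mul_sum]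
  ring

lemma Tmap_inv (hn : 3 ≤ n) (q' r' t' : ℝ) (s' : Fin (n - 2) → ℝ)
    (hq' : q * q' = 1) (hr' : r * r' = 1) (hs' : ∀ j, s' j = -r * s j)
    (ht' : t' = -r ^ 2 * t - 2 * r ^ 2 * ∑ j : Fin (n - 2), s j ^ 2) :
    Tmap n q' r' t' s' (Tmap n q r t s x) = x := by
  funext i
  by_cases h0 : (i : ℕ) = 0
  · have hi : i = (0 : Fin (n + 1)) := Fin.ext (by simpa using h0)
    rw [hi, Tmap_zero, Tmap_zero,
      show q' * (q * x 0) = (q * q') * x 0 from by ring, hq', one_mul]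
  by_cases h1 : (i : ℕ) = 1
  · have hi : i = (⟨1, by omega⟩ : Fin (n + 1)) := Fin.ext (by simpa using h1)
    rw [hi, Tmap_one n q' r' t' s' _ hn, Tmap_one n q r t s x hn]
    have hS : ∑ j : Fin (n - 2), s' j * Tmap n q r t s x (mid n hn j)
        = ∑ j : Fin (n - 2), (-(r ^ 2) * (s j * x (mid n hn j)) - r ^ 2 * s j ^ 2) :=
      Finset.sum_congr rfl fun j _ => by rw [hs', Tmap_mid n q r t s x hn]; ring
    rw [hS, Finset.sum_sub_distrib, ← Finset.mul_sum, ← Finset.mul_sum, ht']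
    rw [show r' ^ 2 * (r ^ 2 * (x ⟨1, by omega⟩
          - 2 * ∑ j : Fin (n - 2), s j * x (mid n hn j) + t)
        - 2 * (-(r ^ 2) * ∑ j : Fin (n - 2), s j * x (mid n hn j)
          - r ^ 2 * ∑ j : Fin (n - 2), s j ^ 2)
        + (-r ^ 2 * t - 2 * r ^ 2 * ∑ j : Fin (n - 2), s j ^ 2))
      = (r * r') ^ 2 * x ⟨1, by omega⟩ from by ring, hr', one_pow, one_mul]
  by_cases h2 : (i : ℕ) = n
  · have hi : i = Fin.last n := Fin.ext (by simpa using h2)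
    rw [hi, Tmap_last n q' r' t' s' _ hn, Tmap_last n q r t s x hn, Tmap_zero]
    have hB : ∑ j : Fin (n - 2), s' j ^ 2 = r ^ 2 * ∑ j : Fin (n - 2), s j ^ 2 := by
      rw [Finset.mul_sum]; exact Finset.sum_congr rfl fun j _ => by rw [hs']; ring
    rw [hB, ht',
      show q' * r' ^ 2 * (q * r ^ 2 * (x (Fin.last n)
            + x 0 * ∑ j : Fin (n - 2), s j ^ 2 + t * x 0)
          + q * x 0 * (r ^ 2 * ∑ j : Fin (n - 2), s j ^ 2)
          + (-r ^ 2 * t - 2 * r ^ 2 * ∑ j : Fin (n - 2), s j ^ 2) * (q * x 0))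
        = (q * q') * (r * r') ^ 2 * x (Fin.last n) from by ring, hq', hr', one_pow, one_mul,
      one_mul]
  · have hj : (i : ℕ) - 2 < n - 2 := by have := i.isLt; omega
    have hi : i = mid n hn ⟨(i : ℕ) - 2, hj⟩ := Fin.ext (by simp [mid]; omega)
    rw [hi, Tmap_mid n q' r' t' s' _ hn, Tmap_mid n q r t s x hn, hs',
      show r' * (r * (x (mid n hn ⟨(i : ℕ) - 2, hj⟩) + s ⟨(i : ℕ) - 2, hj⟩)
          + -r * s ⟨(i : ℕ) - 2, hj⟩)
        = (r * r') * x (mid n hn ⟨(i : ℕ) - 2, hj⟩) from by ring, hr', one_mul]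

lemma Tmap_mapsTo (hn : 3 ≤ n) (hq : 0 < q) (hr : r ≠ 0) :
    Set.MapsTo (Tmap n q r t s) (omegaGT n hn) (omegaGT n hn) ∧
    Set.MapsTo (Tmap n q r t s) (omegaLT n hn) (omegaLT n hn) := by
  have hqr : (0 : ℝ) < q * r ^ 2 := by positivity
  constructor
  · rintro x ⟨hx0, hx⟩
    refine ⟨by rw [Tmap_zero]; positivity, ?_⟩
    have hk := Tmap_key n q r t s x hn
    have h1 : 0 < q * r ^ 2 * (x (Fin.last n) - (x 0 * x ⟨1, by omega⟩
        + x 0 * ∑ j : Fin (n + 1), (if 2 ≤ (j : ℕ) ∧ (j : ℕ) < n then x j ^ 2 else 0))) :=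
      mul_pos hqr (sub_pos.mpr hx)
    linarith
  · rintro x ⟨hx0, hx⟩
    refine ⟨by rw [Tmap_zero]; positivity, ?_⟩
    have hk := Tmap_key n q r t s x hn
    have h1 : q * r ^ 2 * (x (Fin.last n) - (x 0 * x ⟨1, by omega⟩
        + x 0 * ∑ j : Fin (n + 1), (if 2 ≤ (j : ℕ) ∧ (j : ℕ) < n then x j ^ 2 else 0))) < 0 :=
      mul_neg_of_pos_of_neg hqr (sub_neg.mpr hx)
    linarith

end

/-- Every `T_{q,r,t,s}` with `q > 0`, `r ≠ 0` maps `Ω^>` bijectively onto `Ω^>` and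
maps `Ω^<` bijectively onto `Ω^<`. -/
theorem Tmap_bijOn_omega (n : ℕ) (hn : 3 ≤ n) (q r t : ℝ) (s : Fin (n - 2) → ℝ)
    (hq : 0 < q) (hr : r ≠ 0) :
    Set.BijOn (Tmap n q r t s) (omegaGT n hn) (omegaGT n hn) ∧
    Set.BijOn (Tmap n q r t s) (omegaLT n hn) (omegaLT n hn) := by
  set t' : ℝ := -r ^ 2 * t - 2 * r ^ 2 * ∑ j : Fin (n - 2), s j ^ 2 with ht'
  set s' : Fin (n - 2) → ℝ := fun j => -r * s j with hs'
  have hq0 : q ≠ 0 := hq.ne'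
  have hq' : (0 : ℝ) < 1 / q := by positivity
  have hr' : (1 : ℝ) / r ≠ 0 := one_div_ne_zero hr
  have hB : ∑ j : Fin (n - 2), s' j ^ 2 = r ^ 2 * ∑ j : Fin (n - 2), s j ^ 2 := by
    rw [Finset.mul_sum]; exact Finset.sum_congr rfl fun j _ => by rw [hs']; ring
  have hinv1 : ∀ x, Tmap n (1 / q) (1 / r) t' s' (Tmap n q r t s x) = x := fun x =>
    Tmap_inv n q r t s x hn (1 / q) (1 / r) t' s' (by field_simp) (by field_simp)
      (fun j => rfl) ht'
  have hinv2 : ∀ x, Tmap n q r t s (Tmap n (1 / q) (1 / r) t' s' x) = x := fun x =>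
    Tmap_inv n (1 / q) (1 / r) t' s' x hn q r t s (by field_simp) (by field_simp)
      (fun j => by rw [hs']; field_simp)
      (by rw [hB, ht']; field_simp; ring)
  have hm := Tmap_mapsTo n q r t s hn hq hr
  have hm' := Tmap_mapsTo n (1 / q) (1 / r) t' s' hn hq' hr'
  have hinj : Set.InjOn (Tmap n q r t s) Set.univ :=
    (Function.LeftInverse.injective hinv1).injOn
  exact ⟨⟨hm.1, hinj.mono (Set.subset_univ _),
      fun y hy => ⟨Tmap n (1 / q) (1 / r) t' s' y, hm'.1 hy, hinv2 y⟩⟩,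
    ⟨hm.2, hinj.mono (Set.subset_univ _),
      fun y hy => ⟨Tmap n (1 / q) (1 / r) t' s' y, hm'.2 hy, hinv2 y⟩⟩⟩
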